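/- arXiv:2006.07117 — 2 statements merged into one kernel-verified Lean document; each statement's English description precedes it below -/
import Mathlib

section
/- Let T be a doubly block Toeplitz matrix of size rn² × sn² built from finitely many nonzero blocks T_{k,l} ∈ ℂ^{r×s} (nonzero only for -h₁ ≤ k ≤ h₂ and -w₁ ≤ l ≤ w₂), and let C be its doubly block circulant 'wrap-around' counterpart. Then the squared Frobenius norm of C − T is at most a n + b for constants a, b depending only on the blocks T_{k,l} and the filter dimensions, not on n. In particular, lim_{n→∞} ‖T − C‖_F² / n² = 0. -/
open Matrix Filter

/-- The squared Frobenius norm of a matrix. -/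
noncomputable def frobSq {α β : Type*} [Fintype α] [Fintype β] (M : Matrix α β ℂ) : ℝ :=
  ∑ i, ∑ j, ‖M i j‖ ^ 2

private lemma frobSq_eq {α β γ δ : Type*} [Fintype α] [Fintype β] [Fintype γ] [Fintype δ]
    (M : Matrix (α × β) (γ × δ) ℂ) :
    frobSq M = ∑ a, ∑ c, ∑ b, ∑ d, ‖M (a, b) (c, d)‖ ^ 2 := by
  unfold frobSq
  rw [Fintype.sum_prod_type]
  simp_rw [Fintype.sum_prod_type]
  exact Finset.sum_congr rfl fun a _ => Finset.sum_comm

private lemma frobSq_nonneg {α β : Type*} [Fintype α] [Fintype β] (M : Matrix α β ℂ) :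
    0 ≤ frobSq M := by
  unfold frobSq
  positivity

private lemma frobSq_neg {α β : Type*} [Fintype α] [Fintype β] (M : Matrix α β ℂ) :
    frobSq (-M) = frobSq M := by
  unfold frobSq
  simp

private lemma sum_reindex {α β γ δ M : Type*} [Fintype α] [Fintype β] [Fintype γ] [Fintype δ]
    [AddCommMonoid M] (f : α × γ → β × δ → M) :
    ∑ p : α × β, ∑ q : γ × δ, f (p.1, q.1) (p.2, q.2) = ∑ u : α × γ, ∑ v : β × δ, f u v := by
  rw [Fintype.sum_prod_type]
  simp_rw [Fintype.sum_prod_type]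
  exact Finset.sum_congr rfl fun a _ => Finset.sum_comm

private lemma sq_norm_sum_le {ι : Type*} (s : Finset ι) (f : ι → ℂ) :
    ‖∑ i ∈ s, f i‖ ^ 2 ≤ s.card * ∑ i ∈ s, ‖f i‖ ^ 2 := by
  have h1 : ‖∑ i ∈ s, f i‖ ^ 2 ≤ (∑ i ∈ s, ‖f i‖) ^ 2 :=
    pow_le_pow_left₀ (norm_nonneg _) (norm_sum_le s f) 2
  exact h1.trans (sq_sum_le_card_mul_sum_sq (s := s) (f := fun i => ‖f i‖))

private lemma sum_indicator_le {α : Type*} [Fintype α] (P : α → Prop) [DecidablePred P]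
    (f : α → ℝ) (c : ℝ)
    (h0 : ∀ x, ¬ P x → f x = 0) (hc : ∀ x, P x → f x ≤ c) :
    ∑ x, f x ≤ (Finset.univ.filter P).card * c := by
  calc ∑ x, f x ≤ ∑ x, (if P x then c else 0) := by
        refine Finset.sum_le_sum fun x _ => ?_
        by_cases hx : P x
        · simpa [hx] using hc x hx
        · simp [hx, h0 x hx]
    _ = ∑ x ∈ Finset.univ.filter P, c := (Finset.sum_filter _ _).symm
    _ = (Finset.univ.filter P).card * c := by rw [Finset.sum_const, nsmul_eq_mul]

private lemma card_band_le (n a b : ℕ) (m : ℤ) :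
    (Finset.univ.filter fun p : Fin n × Fin n =>
        ((p.1 : ℤ) - (p.2 : ℤ) + (n : ℤ) * m) ∈ Finset.Icc (-(a : ℤ)) (b : ℤ)).card
      ≤ (a + b + 1) * n := by
  classical
  have key := Finset.card_le_card_of_injOn
    (f := fun p : Fin n × Fin n => (((p.1 : ℤ) - (p.2 : ℤ) + (n : ℤ) * m), p.1))
    (s := Finset.univ.filter fun p : Fin n × Fin n =>
        ((p.1 : ℤ) - (p.2 : ℤ) + (n : ℤ) * m) ∈ Finset.Icc (-(a : ℤ)) (b : ℤ))
    (t := Finset.Icc (-(a : ℤ)) (b : ℤ) ×ˢ (Finset.univ : Finset (Fin n)))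
    (by intro p hp
        simp only [Finset.mem_coe, Finset.mem_filter, Finset.mem_univ, true_and] at hp
        simpa using hp)
    (by intro p hp q hq h
        simp only [Prod.mk.injEq] at h
        have h1 : p.1 = q.1 := h.2
        have h2 : (p.2 : ℤ) = (q.2 : ℤ) := by
          have := h.1; rw [h1] at this; omega
        exact Prod.ext h1 (Fin.ext (by exact_mod_cast h2)))
  refine key.trans ?_
  rw [Finset.card_product, Finset.card_univ, Fintype.card_fin, Int.card_Icc]
  have : ((b : ℤ) + 1 - -(a : ℤ)).toNat = a + b + 1 := by omega
  rw [this]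

private lemma card_band_le_one (n a b : ℕ) (m : ℤ) (hm : m = 1 ∨ m = -1) :
    (Finset.univ.filter fun p : Fin n × Fin n =>
        ((p.1 : ℤ) - (p.2 : ℤ) + (n : ℤ) * m) ∈ Finset.Icc (-(a : ℤ)) (b : ℤ)).card
      ≤ (a + b + 1) * (a + b + 1) := by
  classical
  have gen : ∀ (g : Fin n × Fin n → Fin n),
      (∀ p q : Fin n × Fin n,
        ((p.1 : ℤ) - (p.2 : ℤ) + (n : ℤ) * m) = ((q.1 : ℤ) - (q.2 : ℤ) + (n : ℤ) * m) →
        g p = g q → p = q) →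
      (∀ p : Fin n × Fin n,
        ((p.1 : ℤ) - (p.2 : ℤ) + (n : ℤ) * m) ∈ Finset.Icc (-(a : ℤ)) (b : ℤ) →
        (g p : ℕ) < a + b + 1) →
      (Finset.univ.filter fun p : Fin n × Fin n =>
        ((p.1 : ℤ) - (p.2 : ℤ) + (n : ℤ) * m) ∈ Finset.Icc (-(a : ℤ)) (b : ℤ)).card
      ≤ (a + b + 1) * (a + b + 1) := by
    intro g hinj hlt
    have key := Finset.card_le_card_of_injOn
      (f := fun p : Fin n × Fin n => (((p.1 : ℤ) - (p.2 : ℤ) + (n : ℤ) * m), (g p : ℕ)))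
      (s := Finset.univ.filter fun p : Fin n × Fin n =>
          ((p.1 : ℤ) - (p.2 : ℤ) + (n : ℤ) * m) ∈ Finset.Icc (-(a : ℤ)) (b : ℤ))
      (t := Finset.Icc (-(a : ℤ)) (b : ℤ) ×ˢ Finset.range (a + b + 1))
      (by intro p hp
          simp only [Finset.mem_coe, Finset.mem_filter, Finset.mem_univ, true_and] at hp
          simp only [Finset.mem_coe, Finset.mem_product, Finset.mem_range]
          exact ⟨hp, hlt p hp⟩)
      (by intro p hp q hq h
          simp only [Prod.mk.injEq] at h
          exact hinj p q h.1 (Fin.ext h.2))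
    refine key.trans ?_
    rw [Finset.card_product, Finset.card_range, Int.card_Icc]
    have : ((b : ℤ) + 1 - -(a : ℤ)).toNat = a + b + 1 := by omega
    rw [this]
  rcases hm with h1 | h1
  · subst h1
    refine gen (fun p => p.1) (fun p q hd hg => ?_) (fun p hp => ?_)
    · have h2 : (p.2 : ℤ) = (q.2 : ℤ) := by
        have hg' : (p.1 : ℤ) = (q.1 : ℤ) := by exact_mod_cast congrArg Fin.val hg
        omega
      exact Prod.ext hg (Fin.ext (by exact_mod_cast h2))
    · simp only [Finset.mem_Icc] at hp
      have hp2 : (p.2 : ℕ) < n := p.2.isLt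
      have hp1 : (p.1 : ℕ) < n := p.1.isLt
      show (p.1 : ℕ) < a + b + 1
      omega
  · subst h1
    refine gen (fun p => p.2) (fun p q hd hg => ?_) (fun p hp => ?_)
    · have h2 : (p.1 : ℤ) = (q.1 : ℤ) := by
        have hg' : (p.2 : ℤ) = (q.2 : ℤ) := by exact_mod_cast congrArg Fin.val hg
        omega
      exact Prod.ext (Fin.ext (by exact_mod_cast h2)) hg
    · simp only [Finset.mem_Icc] at hp
      have hp2 : (p.2 : ℕ) < n := p.2.isLt
      have hp1 : (p.1 : ℕ) < n := p.1.isLt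
      show (p.2 : ℕ) < a + b + 1
      omega

private lemma pointwise_bound {r s : ℕ} (Tb : ℤ → ℤ → Matrix (Fin r) (Fin s) ℂ)
    (n : ℕ) (k l : ℤ) :
    ∑ c : Fin r, ∑ d : Fin s,
      ‖(∑ m₁ ∈ Finset.Icc (-1:ℤ) 1, ∑ m₂ ∈ Finset.Icc (-1:ℤ) 1,
          Tb (k + (n:ℤ) * m₁) (l + (n:ℤ) * m₂) c d) - Tb k l c d‖ ^ 2
    ≤ 8 * ∑ m ∈ (Finset.Icc (-1:ℤ) 1 ×ˢ Finset.Icc (-1:ℤ) 1).erase ((0:ℤ), (0:ℤ)),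
        ∑ c : Fin r, ∑ d : Fin s, ‖Tb (k + (n:ℤ) * m.1) (l + (n:ℤ) * m.2) c d‖ ^ 2 := by
  classical
  set P := Finset.Icc (-1:ℤ) 1 ×ˢ Finset.Icc (-1:ℤ) 1 with hP
  have hmem : ((0:ℤ), (0:ℤ)) ∈ P := by simp [hP]
  have hcard : (P.erase ((0:ℤ), (0:ℤ))).card = 8 := by
    rw [Finset.card_erase_of_mem hmem, hP, Finset.card_product, Int.card_Icc]
    rfl
  have hdiff : ∀ (c : Fin r) (d : Fin s),
      (∑ m₁ ∈ Finset.Icc (-1:ℤ) 1, ∑ m₂ ∈ Finset.Icc (-1:ℤ) 1,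
          Tb (k + (n:ℤ) * m₁) (l + (n:ℤ) * m₂) c d) - Tb k l c d
      = ∑ m ∈ P.erase ((0:ℤ), (0:ℤ)), Tb (k + (n:ℤ) * m.1) (l + (n:ℤ) * m.2) c d := by
    intro c d
    rw [Finset.sum_erase_eq_sub hmem]
    congr 1
    · rw [hP, Finset.sum_product]
    · norm_num
  calc ∑ c : Fin r, ∑ d : Fin s,
        ‖(∑ m₁ ∈ Finset.Icc (-1:ℤ) 1, ∑ m₂ ∈ Finset.Icc (-1:ℤ) 1,
            Tb (k + (n:ℤ) * m₁) (l + (n:ℤ) * m₂) c d) - Tb k l c d‖ ^ 2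
      = ∑ c : Fin r, ∑ d : Fin s,
          ‖∑ m ∈ P.erase ((0:ℤ), (0:ℤ)), Tb (k + (n:ℤ) * m.1) (l + (n:ℤ) * m.2) c d‖ ^ 2 := by
        refine Finset.sum_congr rfl fun c _ => Finset.sum_congr rfl fun d _ => ?_
        rw [hdiff c d]
    _ ≤ ∑ c : Fin r, ∑ d : Fin s,
          8 * ∑ m ∈ P.erase ((0:ℤ), (0:ℤ)), ‖Tb (k + (n:ℤ) * m.1) (l + (n:ℤ) * m.2) c d‖ ^ 2 := by
        refine Finset.sum_le_sum fun c _ => Finset.sum_le_sum fun d _ => ?_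
        have := sq_norm_sum_le (P.erase ((0:ℤ), (0:ℤ)))
          (fun m => Tb (k + (n:ℤ) * m.1) (l + (n:ℤ) * m.2) c d)
        rw [hcard] at this
        exact_mod_cast this
    _ = 8 * ∑ c : Fin r, ∑ d : Fin s, ∑ m ∈ P.erase ((0:ℤ), (0:ℤ)),
          ‖Tb (k + (n:ℤ) * m.1) (l + (n:ℤ) * m.2) c d‖ ^ 2 := by
        simp_rw [← Finset.mul_sum]
    _ = 8 * ∑ m ∈ P.erase ((0:ℤ), (0:ℤ)),
          ∑ c : Fin r, ∑ d : Fin s, ‖Tb (k + (n:ℤ) * m.1) (l + (n:ℤ) * m.2) c d‖ ^ 2 := by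
        congr 1
        calc ∑ c : Fin r, ∑ d : Fin s, ∑ m ∈ P.erase ((0:ℤ), (0:ℤ)),
              ‖Tb (k + (n:ℤ) * m.1) (l + (n:ℤ) * m.2) c d‖ ^ 2
            = ∑ c : Fin r, ∑ m ∈ P.erase ((0:ℤ), (0:ℤ)), ∑ d : Fin s,
              ‖Tb (k + (n:ℤ) * m.1) (l + (n:ℤ) * m.2) c d‖ ^ 2 :=
              Finset.sum_congr rfl fun c _ => Finset.sum_comm
          _ = ∑ m ∈ P.erase ((0:ℤ), (0:ℤ)), ∑ c : Fin r, ∑ d : Fin s,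
              ‖Tb (k + (n:ℤ) * m.1) (l + (n:ℤ) * m.2) c d‖ ^ 2 := Finset.sum_comm

private lemma per_m_bound (h₁ h₂ w₁ w₂ n : ℕ) (S : ℤ → ℤ → ℝ) (B : ℝ) (hB : 0 ≤ B)
    (hS0 : ∀ k l : ℤ,
      k ∉ Finset.Icc (-(h₁:ℤ)) (h₂:ℤ) ∨ l ∉ Finset.Icc (-(w₁:ℤ)) (w₂:ℤ) → S k l = 0)
    (hSB : ∀ k l : ℤ, S k l ≤ B)
    (m₁ m₂ : ℤ) (hm₁ : m₁ ∈ Finset.Icc (-1:ℤ) 1) (hm₂ : m₂ ∈ Finset.Icc (-1:ℤ) 1)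
    (hm : ¬(m₁ = 0 ∧ m₂ = 0)) :
    ∑ u : Fin n × Fin n, ∑ v : Fin n × Fin n,
      S ((u.1:ℤ) - (u.2:ℤ) + (n:ℤ) * m₁) ((v.1:ℤ) - (v.2:ℤ) + (n:ℤ) * m₂)
    ≤ ((((h₁ + h₂ + 1) * (w₁ + w₂ + 1)) ^ 2 : ℕ) : ℝ) * (n:ℝ) * B := by
  classical
  set A₁ := Finset.univ.filter fun u : Fin n × Fin n =>
      ((u.1:ℤ) - (u.2:ℤ) + (n:ℤ) * m₁) ∈ Finset.Icc (-(h₁:ℤ)) (h₂:ℤ) with hA₁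
  set A₂ := Finset.univ.filter fun v : Fin n × Fin n =>
      ((v.1:ℤ) - (v.2:ℤ) + (n:ℤ) * m₂) ∈ Finset.Icc (-(w₁:ℤ)) (w₂:ℤ) with hA₂
  have step : ∑ u : Fin n × Fin n, ∑ v : Fin n × Fin n,
      S ((u.1:ℤ) - (u.2:ℤ) + (n:ℤ) * m₁) ((v.1:ℤ) - (v.2:ℤ) + (n:ℤ) * m₂)
      ≤ (A₁.card : ℝ) * ((A₂.card : ℝ) * B) := by
    refine sum_indicator_le _ _ _ ?_ ?_
    · intro u hu
      refine Finset.sum_eq_zero fun v _ => ?_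
      exact hS0 _ _ (Or.inl hu)
    · intro u _
      refine sum_indicator_le _ _ _ ?_ ?_
      · intro v hv
        exact hS0 _ _ (Or.inr hv)
      · intro v _
        exact hSB _ _
  refine step.trans ?_
  have hcard : A₁.card * A₂.card ≤ ((h₁ + h₂ + 1) * (w₁ + w₂ + 1)) ^ 2 * n := by
    have hIcc : m₁ = -1 ∨ m₁ = 0 ∨ m₁ = 1 := by
      simp only [Finset.mem_Icc] at hm₁; omega
    by_cases h0 : m₁ = 0
    · have hm₂' : m₂ = 1 ∨ m₂ = -1 := by
        simp only [Finset.mem_Icc] at hm₂; omega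
      have c1 : A₁.card ≤ (h₁ + h₂ + 1) * n := card_band_le n h₁ h₂ m₁
      have c2 : A₂.card ≤ (w₁ + w₂ + 1) * (w₁ + w₂ + 1) := card_band_le_one n w₁ w₂ m₂ hm₂'
      calc A₁.card * A₂.card ≤ ((h₁ + h₂ + 1) * n) * ((w₁ + w₂ + 1) * (w₁ + w₂ + 1)) :=
            Nat.mul_le_mul c1 c2
        _ = ((h₁ + h₂ + 1) * n * ((w₁ + w₂ + 1) * (w₁ + w₂ + 1))) * 1 := by ring
        _ ≤ ((h₁ + h₂ + 1) * n * ((w₁ + w₂ + 1) * (w₁ + w₂ + 1))) * (h₁ + h₂ + 1) :=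
            Nat.mul_le_mul_left _ (by omega)
        _ = ((h₁ + h₂ + 1) * (w₁ + w₂ + 1)) ^ 2 * n := by ring
    · have hm₁' : m₁ = 1 ∨ m₁ = -1 := by tauto
      have c1 : A₁.card ≤ (h₁ + h₂ + 1) * (h₁ + h₂ + 1) := card_band_le_one n h₁ h₂ m₁ hm₁'
      have c2 : A₂.card ≤ (w₁ + w₂ + 1) * n := card_band_le n w₁ w₂ m₂
      calc A₁.card * A₂.card ≤ ((h₁ + h₂ + 1) * (h₁ + h₂ + 1)) * ((w₁ + w₂ + 1) * n) :=
            Nat.mul_le_mul c1 c2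
        _ = ((h₁ + h₂ + 1) * (h₁ + h₂ + 1) * ((w₁ + w₂ + 1) * n)) * 1 := by ring
        _ ≤ ((h₁ + h₂ + 1) * (h₁ + h₂ + 1) * ((w₁ + w₂ + 1) * n)) * (w₁ + w₂ + 1) :=
            Nat.mul_le_mul_left _ (by omega)
        _ = ((h₁ + h₂ + 1) * (w₁ + w₂ + 1)) ^ 2 * n := by ring
  calc (A₁.card : ℝ) * ((A₂.card : ℝ) * B) = ((A₁.card * A₂.card : ℕ) : ℝ) * B := by
        push_cast; ring
    _ ≤ ((((h₁ + h₂ + 1) * (w₁ + w₂ + 1)) ^ 2 * n : ℕ) : ℝ) * B := by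
        have : ((A₁.card * A₂.card : ℕ) : ℝ) ≤ ((((h₁ + h₂ + 1) * (w₁ + w₂ + 1)) ^ 2 * n : ℕ) : ℝ) := by
          exact_mod_cast hcard
        exact mul_le_mul_of_nonneg_right this hB
    _ = ((((h₁ + h₂ + 1) * (w₁ + w₂ + 1)) ^ 2 : ℕ) : ℝ) * (n:ℝ) * B := by push_cast; ring

/-- For a banded doubly block Toeplitz matrix `T` and its doubly block circulant
wrap-around counterpart `C`, `‖C − T‖_F² ≤ a n + b` for constants `a, b` independent of `n`;
in particular `‖T − C‖_F²/n² → 0`. -/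
theorem stmt6 (r s h₁ h₂ w₁ w₂ : ℕ) (Tb : ℤ → ℤ → Matrix (Fin r) (Fin s) ℂ)
    (hband : ∀ k l : ℤ,
      (k < -(h₁ : ℤ) ∨ (h₂ : ℤ) < k ∨ l < -(w₁ : ℤ) ∨ (w₂ : ℤ) < l) → Tb k l = 0) :
    let T : (n : ℕ) → Matrix ((Fin n × Fin n) × Fin r) ((Fin n × Fin n) × Fin s) ℂ :=
      fun n ipc jqd =>
        Tb (((ipc.1.1 : ℕ) : ℤ) - ((jqd.1.1 : ℕ) : ℤ))
          (((ipc.1.2 : ℕ) : ℤ) - ((jqd.1.2 : ℕ) : ℤ)) ipc.2 jqd.2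
    let C : (n : ℕ) → Matrix ((Fin n × Fin n) × Fin r) ((Fin n × Fin n) × Fin s) ℂ :=
      fun n ipc jqd =>
        ∑ m₁ ∈ Finset.Icc (-1 : ℤ) 1, ∑ m₂ ∈ Finset.Icc (-1 : ℤ) 1,
          Tb (((ipc.1.1 : ℕ) : ℤ) - ((jqd.1.1 : ℕ) : ℤ) + (n : ℤ) * m₁)
            (((ipc.1.2 : ℕ) : ℤ) - ((jqd.1.2 : ℕ) : ℤ) + (n : ℤ) * m₂) ipc.2 jqd.2
    ∃ a b : ℝ, (∀ n : ℕ, frobSq (C n - T n) ≤ a * n + b) ∧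
      Tendsto (fun n : ℕ => frobSq (T n - C n) / (n : ℝ) ^ 2) atTop (nhds 0) := by
  intro T C
  classical
  set S : ℤ → ℤ → ℝ := fun k l => ∑ c : Fin r, ∑ d : Fin s, ‖Tb k l c d‖ ^ 2 with hS
  have hSnn : ∀ k l : ℤ, 0 ≤ S k l := by
    intro k l; rw [hS]; positivity
  have hS0 : ∀ k l : ℤ,
      k ∉ Finset.Icc (-(h₁:ℤ)) (h₂:ℤ) ∨ l ∉ Finset.Icc (-(w₁:ℤ)) (w₂:ℤ) → S k l = 0 := by
    intro k l h
    have hTb : Tb k l = 0 := by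
      apply hband
      rcases h with h | h <;> simp only [Finset.mem_Icc, not_and_or, not_le] at h <;> omega
    simp [hS, hTb]
  set B : ℝ := ∑ k ∈ Finset.Icc (-(h₁:ℤ)) (h₂:ℤ), ∑ l ∈ Finset.Icc (-(w₁:ℤ)) (w₂:ℤ), S k l
    with hBdef
  have hBnn : 0 ≤ B :=
    Finset.sum_nonneg fun k _ => Finset.sum_nonneg fun l _ => hSnn k l
  have hSB : ∀ k l : ℤ, S k l ≤ B := by
    intro k l
    by_cases hk : k ∈ Finset.Icc (-(h₁:ℤ)) (h₂:ℤ)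
    · by_cases hl : l ∈ Finset.Icc (-(w₁:ℤ)) (w₂:ℤ)
      · calc S k l ≤ ∑ l' ∈ Finset.Icc (-(w₁:ℤ)) (w₂:ℤ), S k l' :=
              Finset.single_le_sum (fun l' _ => hSnn k l') hl
          _ ≤ B := Finset.single_le_sum
              (f := fun k' => ∑ l' ∈ Finset.Icc (-(w₁:ℤ)) (w₂:ℤ), S k' l')
              (fun k' _ => Finset.sum_nonneg fun l' _ => hSnn k' l') hk
      · rw [hS0 k l (Or.inr hl)]; exact hBnn
    · rw [hS0 k l (Or.inl hk)]; exact hBnn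
  set K : ℕ := ((h₁ + h₂ + 1) * (w₁ + w₂ + 1)) ^ 2 with hK
  have hP8 : ((Finset.Icc (-1:ℤ) 1 ×ˢ Finset.Icc (-1:ℤ) 1).erase ((0:ℤ), (0:ℤ))).card = 8 := by
    rw [Finset.card_erase_of_mem (by simp), Finset.card_product, Int.card_Icc]
    rfl
  have hbound : ∀ n : ℕ, frobSq (C n - T n) ≤ 64 * (K:ℝ) * B * n := by
    intro n
    calc frobSq (C n - T n)
        = ∑ p : Fin n × Fin n, ∑ q : Fin n × Fin n, ∑ c : Fin r, ∑ d : Fin s,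
            ‖(C n - T n) (p, c) (q, d)‖ ^ 2 := frobSq_eq _
      _ ≤ ∑ p : Fin n × Fin n, ∑ q : Fin n × Fin n,
            8 * ∑ m ∈ (Finset.Icc (-1:ℤ) 1 ×ˢ Finset.Icc (-1:ℤ) 1).erase ((0:ℤ), (0:ℤ)),
              S (((p.1 : ℕ) : ℤ) - ((q.1 : ℕ) : ℤ) + (n:ℤ) * m.1)
                (((p.2 : ℕ) : ℤ) - ((q.2 : ℕ) : ℤ) + (n:ℤ) * m.2) := by
          refine Finset.sum_le_sum fun p _ => Finset.sum_le_sum fun q _ => ?_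
          have h := pointwise_bound Tb n (((p.1 : ℕ) : ℤ) - ((q.1 : ℕ) : ℤ))
            (((p.2 : ℕ) : ℤ) - ((q.2 : ℕ) : ℤ))
          rw [hS]
          exact h
      _ = 8 * ∑ m ∈ (Finset.Icc (-1:ℤ) 1 ×ˢ Finset.Icc (-1:ℤ) 1).erase ((0:ℤ), (0:ℤ)),
            ∑ p : Fin n × Fin n, ∑ q : Fin n × Fin n,
              S (((p.1 : ℕ) : ℤ) - ((q.1 : ℕ) : ℤ) + (n:ℤ) * m.1)
                (((p.2 : ℕ) : ℤ) - ((q.2 : ℕ) : ℤ) + (n:ℤ) * m.2) := by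
          simp_rw [← Finset.mul_sum]
          congr 1
          calc ∑ p : Fin n × Fin n, ∑ q : Fin n × Fin n, ∑ m ∈ _, _
              = ∑ p : Fin n × Fin n, ∑ m ∈ _, ∑ q : Fin n × Fin n, _ :=
                Finset.sum_congr rfl fun p _ => Finset.sum_comm
            _ = _ := Finset.sum_comm
      _ = 8 * ∑ m ∈ (Finset.Icc (-1:ℤ) 1 ×ˢ Finset.Icc (-1:ℤ) 1).erase ((0:ℤ), (0:ℤ)),
            ∑ u : Fin n × Fin n, ∑ v : Fin n × Fin n,
              S (((u.1 : ℕ) : ℤ) - ((u.2 : ℕ) : ℤ) + (n:ℤ) * m.1)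
                (((v.1 : ℕ) : ℤ) - ((v.2 : ℕ) : ℤ) + (n:ℤ) * m.2) := by
          congr 1
          refine Finset.sum_congr rfl fun m _ => ?_
          exact sum_reindex (f := fun u v : Fin n × Fin n =>
            S (((u.1 : ℕ) : ℤ) - ((u.2 : ℕ) : ℤ) + (n:ℤ) * m.1)
              (((v.1 : ℕ) : ℤ) - ((v.2 : ℕ) : ℤ) + (n:ℤ) * m.2))
      _ ≤ 8 * ∑ _m ∈ (Finset.Icc (-1:ℤ) 1 ×ˢ Finset.Icc (-1:ℤ) 1).erase ((0:ℤ), (0:ℤ)),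
            (K : ℝ) * (n:ℝ) * B := by
          refine mul_le_mul_of_nonneg_left (Finset.sum_le_sum fun m hm => ?_) (by norm_num)
          rw [Finset.mem_erase, Finset.mem_product] at hm
          refine per_m_bound h₁ h₂ w₁ w₂ n S B hBnn hS0 hSB m.1 m.2 hm.2.1 hm.2.2 ?_
          rintro ⟨h1, h2⟩
          exact hm.1 (Prod.ext h1 h2)
      _ = 64 * (K:ℝ) * B * n := by
          rw [Finset.sum_const, hP8, nsmul_eq_mul]
          push_cast
          ring
  refine ⟨64 * (K:ℝ) * B, 0, fun n => by simpa using hbound n, ?_⟩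
  have hTC : ∀ n : ℕ, frobSq (T n - C n) = frobSq (C n - T n) := by
    intro n
    rw [← frobSq_neg (C n - T n), neg_sub]
  apply squeeze_zero (g := fun n : ℕ => 64 * (K:ℝ) * B / n)
  · intro n
    exact div_nonneg (frobSq_nonneg _) (by positivity)
  · intro n
    rcases Nat.eq_zero_or_pos n with hn | hn
    · subst hn
      simp
    · rw [hTC n]
      have hn' : (0:ℝ) < n := by exact_mod_cast hn
      calc frobSq (C n - T n) / (n:ℝ) ^ 2 ≤ (64 * (K:ℝ) * B * n) / (n:ℝ) ^ 2 := by
            gcongr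
            exact hbound n
        _ = 64 * (K:ℝ) * B / n := by
            field_simp
  · exact tendsto_const_div_atTop_nhds_zero_nat _
end

section
/- Let T be a banded block Toeplitz matrix of size rn × sn generated by a matrix trigonometric polynomial F(ω) = Σ_{k=-h₁}^{h₂} T_k e^{ikω}. Then the spectral norm of T is at most the supremum over ω ∈ [-π,π] of the spectral norm of F(ω): ‖T‖₂ ≤ max_ω ‖F(ω)‖₂. -/
open Matrix Complex

noncomputable def Qsum {ι : Type*} [Fintype ι] (y : ι → ℂ) : ℝ := ∑ i, Complex.normSq (y i)

lemma Qsum_nonneg {ι : Type*} [Fintype ι] (y : ι → ℂ) : 0 ≤ Qsum y :=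
  Finset.sum_nonneg fun _ _ => Complex.normSq_nonneg _

lemma star_dot_self {ι : Type*} [Fintype ι] (y : ι → ℂ) : star y ⬝ᵥ y = (Qsum y : ℂ) := by
  simp [dotProduct, Qsum, Complex.normSq_eq_conj_mul_self]

lemma Qsum_mulVec {m n : Type*} [Fintype m] [Fintype n] (M : Matrix m n ℂ) (x : n → ℂ) :
    (Qsum (M *ᵥ x) : ℂ) = star x ⬝ᵥ ((Mᴴ * M) *ᵥ x) := by
  rw [← star_dot_self, star_mulVec, ← mulVec_mulVec]
  rw [dotProduct_mulVec, vecMul_vecMul, mulVec_mulVec, ← dotProduct_mulVec]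

open scoped ComplexOrder in
lemma herm_quad_le {n : Type*} [Fintype n] [DecidableEq n] {A : Matrix n n ℂ}
    (hA : A.IsHermitian) (t : ℝ) (ht : ∀ i, hA.eigenvalues i ≤ t) (x : n → ℂ) :
    Complex.re (star x ⬝ᵥ (A *ᵥ x)) ≤ t * Qsum x := by
  set U : Matrix n n ℂ := (hA.eigenvectorUnitary : Matrix n n ℂ) with hU
  have hUU : U * Uᴴ = 1 := by
    rw [← Matrix.star_eq_conjTranspose]
    exact (Unitary.mem_iff.mp hA.eigenvectorUnitary.2).2
  have hdiag : Matrix.diagonal (fun i => ((t - hA.eigenvalues i : ℝ) : ℂ))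
      = (t : ℂ) • (1 : Matrix n n ℂ)
        - Matrix.diagonal (RCLike.ofReal ∘ hA.eigenvalues) := by
    ext i j
    rcases eq_or_ne i j with rfl | h
    · simp [Matrix.one_apply]
    · simp [Matrix.diagonal_apply_ne _ h, Matrix.one_apply_ne h]
  have hB : ((t : ℂ) • (1 : Matrix n n ℂ) - A)
      = U * Matrix.diagonal (fun i => ((t - hA.eigenvalues i : ℝ) : ℂ)) * Uᴴ := by
    rw [hdiag, Matrix.mul_sub, Matrix.sub_mul, Matrix.mul_smul, Matrix.smul_mul, Matrix.mul_one,
      hUU]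
    congr 1
    conv_lhs => rw [hA.spectral_theorem]
    rw [Unitary.conjStarAlgAut_apply, Matrix.star_eq_conjTranspose]
  have hpos : Matrix.PosSemidef ((t : ℂ) • (1 : Matrix n n ℂ) - A) := by
    rw [hB]
    refine (Matrix.PosSemidef.diagonal ?_).mul_mul_conjTranspose_same U
    intro i
    exact Complex.zero_le_real.mpr (sub_nonneg.mpr (ht i))
  have h0 := hpos.re_dotProduct_nonneg x
  rw [Matrix.sub_mulVec, Matrix.smul_mulVec, Matrix.one_mulVec, dotProduct_sub,
    dotProduct_smul, star_dot_self] at h0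
  simp only [map_sub, smul_eq_mul, RCLike.re_to_complex, ← Complex.ofReal_mul,
    Complex.ofReal_re] at h0
  linarith

/-- The multiset of singular values of a complex matrix `M`. -/
noncomputable def singularValues {m n : Type*} [Fintype m] [Fintype n] [DecidableEq n]
    (M : Matrix m n ℂ) : Multiset ℝ :=
  (Finset.univ.val).map fun i =>
    Real.sqrt ((Matrix.isHermitian_conjTranspose_mul_self M).eigenvalues i)

/-- The `j`-th largest singular value of `M` (0-indexed). -/
noncomputable def svDesc {m n : Type*} [Fintype m] [Fintype n] [DecidableEq n]
    (M : Matrix m n ℂ) (j : ℕ) : ℝ :=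
  (((singularValues M).sort (· ≤ ·)).reverse).getD j 0

/-- The spectral norm (largest singular value) of a matrix. -/
noncomputable def specNorm {m n : Type*} [Fintype m] [Fintype n] [DecidableEq n]
    (M : Matrix m n ℂ) : ℝ :=
  svDesc M 0

section specNormLemmas

variable {m n : Type*} [Fintype m] [Fintype n] [DecidableEq n] (M : Matrix m n ℂ)

lemma mem_singularValues {x : ℝ} :
    x ∈ singularValues M ↔
      ∃ i, Real.sqrt ((Matrix.isHermitian_conjTranspose_mul_self M).eigenvalues i) = x := by
  simp [singularValues]

lemma specNorm_nonneg : 0 ≤ specNorm M := by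
  unfold specNorm svDesc
  rcases hl : ((singularValues M).sort (· ≤ ·)).reverse with _ | ⟨a, t⟩
  · simp
  · have ha : a ∈ singularValues M := by
      rw [← Multiset.mem_sort (· ≤ ·), ← List.mem_reverse, hl]
      exact List.mem_cons_self
    obtain ⟨i, hi⟩ := (mem_singularValues M).mp ha
    simpa using hi ▸ Real.sqrt_nonneg _

lemma le_specNorm {x : ℝ} (hx : x ∈ singularValues M) : x ≤ specNorm M := by
  unfold specNorm svDesc
  have hs : (((singularValues M).sort (· ≤ ·)).reverse).Pairwise (fun a b => b ≤ a) := by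
    exact List.pairwise_reverse.mpr (Multiset.pairwise_sort _ (· ≤ ·))
  have hmem : x ∈ ((singularValues M).sort (· ≤ ·)).reverse := by
    rw [List.mem_reverse, Multiset.mem_sort]; exact hx
  rcases hl : ((singularValues M).sort (· ≤ ·)).reverse with _ | ⟨a, t⟩
  · rw [hl] at hmem; simp at hmem
  · rw [hl] at hmem hs
    rcases List.mem_cons.mp hmem with rfl | hxt
    · simp
    · simpa using (List.pairwise_cons.mp hs).1 x hxt

lemma specNorm_le {c : ℝ} (hc : 0 ≤ c) (h : ∀ x ∈ singularValues M, x ≤ c) :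
    specNorm M ≤ c := by
  unfold specNorm svDesc
  rcases hl : ((singularValues M).sort (· ≤ ·)).reverse with _ | ⟨a, t⟩
  · simpa using hc
  · have ha : a ∈ singularValues M := by
      rw [← Multiset.mem_sort (· ≤ ·), ← List.mem_reverse, hl]
      exact List.mem_cons_self
    simpa using h a ha

lemma mulVec_le_specNorm (x : n → ℂ) : Qsum (M *ᵥ x) ≤ (specNorm M)^2 * Qsum x := by
  have hA := Matrix.isHermitian_conjTranspose_mul_self M
  have ht : ∀ i, hA.eigenvalues i ≤ (specNorm M)^2 := by
    intro i
    have h1 : 0 ≤ hA.eigenvalues i := Matrix.eigenvalues_conjTranspose_mul_self_nonneg M i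
    have h2 : Real.sqrt (hA.eigenvalues i) ≤ specNorm M :=
      le_specNorm M ((mem_singularValues M).mpr ⟨i, rfl⟩)
    calc hA.eigenvalues i = (Real.sqrt (hA.eigenvalues i))^2 := (Real.sq_sqrt h1).symm
    _ ≤ (specNorm M)^2 := by
        exact pow_le_pow_left₀ (Real.sqrt_nonneg _) h2 2
  have := herm_quad_le hA ((specNorm M)^2) ht x
  have hQ : Complex.re (star x ⬝ᵥ ((Mᴴ * M) *ᵥ x)) = Qsum (M *ᵥ x) := by
    rw [← Qsum_mulVec]; exact Complex.ofReal_re _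
  linarith [hQ ▸ this]

lemma Qsum_eigenvectorBasis {A : Matrix n n ℂ} (hA : A.IsHermitian) (i : n) :
    Qsum ⇑(hA.eigenvectorBasis i) = 1 := by
  have h1 : ‖hA.eigenvectorBasis i‖ = 1 := hA.eigenvectorBasis.orthonormal.1 i
  have h2 : ‖hA.eigenvectorBasis i‖ = Real.sqrt (∑ j, ‖hA.eigenvectorBasis i j‖ ^ 2) :=
    EuclideanSpace.norm_eq _
  have h3 : Qsum ⇑(hA.eigenvectorBasis i) = ∑ j, ‖hA.eigenvectorBasis i j‖ ^ 2 := by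
    unfold Qsum
    exact Finset.sum_congr rfl fun j _ => Complex.normSq_eq_norm_sq _
  rw [h3]
  have h4 : Real.sqrt (∑ j, ‖hA.eigenvectorBasis i j‖ ^ 2) = 1 := h2 ▸ h1
  exact Real.sqrt_eq_one.mp h4

lemma specNorm_le_of_quad {c : ℝ} (hc : 0 ≤ c)
    (h : ∀ x : n → ℂ, Qsum (M *ᵥ x) ≤ c^2 * Qsum x) : specNorm M ≤ c := by
  refine specNorm_le M hc ?_
  intro x hx
  obtain ⟨i, rfl⟩ := (mem_singularValues M).mp hx
  have hA := Matrix.isHermitian_conjTranspose_mul_self M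
  set u : n → ℂ := ⇑(hA.eigenvectorBasis i) with hu
  have heig : hA.eigenvalues i = Qsum (M *ᵥ u) := by
    rw [hA.eigenvalues_eq]
    have : (Qsum (M *ᵥ u) : ℂ) = star u ⬝ᵥ ((Mᴴ * M) *ᵥ u) := Qsum_mulVec M u
    rw [← this]
    exact (Complex.ofReal_re _).symm
  have hQu : Qsum u = 1 := Qsum_eigenvectorBasis hA i
  have := h u
  rw [← heig, hQu, mul_one] at this
  calc Real.sqrt (hA.eigenvalues i) ≤ Real.sqrt (c^2) := Real.sqrt_le_sqrt this
  _ = c := Real.sqrt_sq hc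

end specNormLemmas

open intervalIntegral Real in
lemma int_exp_int (k : ℤ) :
    (∫ ω in (-Real.pi)..Real.pi, Complex.exp (Complex.I * (k : ℂ) * (ω : ℂ))) =
      if k = 0 then (2 * Real.pi : ℂ) else 0 := by
  rcases eq_or_ne k 0 with rfl | hk
  · simp
    norm_num
    ring
  · rw [if_neg hk]
    have hc : Complex.I * (k : ℂ) ≠ 0 := by
      simp [Complex.I_ne_zero, Complex.ext_iff]
      exact_mod_cast hk
    have := integral_exp_mul_complex (a := -Real.pi) (b := Real.pi) hc
    simp only [mul_assoc] at this ⊢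
    rw [this]
    have key : Complex.exp (Complex.I * ((k : ℂ) * (Real.pi : ℂ)))
        = Complex.exp (Complex.I * ((k : ℂ) * ((-Real.pi : ℝ) : ℂ))) := by
      have harg : Complex.I * ((k : ℂ) * (Real.pi : ℂ))
          = Complex.I * ((k : ℂ) * ((-Real.pi : ℝ) : ℂ)) + (k : ℂ) * (2 * Real.pi * Complex.I) := by
        push_cast; ring
      rw [harg, Complex.exp_add, Complex.exp_int_mul_two_pi_mul_I, mul_one]
    rw [key, sub_self, zero_div]

lemma cont_exp_smul (c : ℂ) (m : ℤ) :
    Continuous fun ω : ℝ => Complex.exp (Complex.I * (m : ℂ) * (ω : ℂ)) * c := by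
  fun_prop

open intervalIntegral in
lemma parseval_complex {ι : Type*} [Fintype ι] [DecidableEq ι] (e : ι → ℤ) (he : Function.Injective e)
    (a : ι → ℂ) :
    (∫ ω in (-Real.pi)..Real.pi,
        (∑ i, Complex.exp (Complex.I * (e i : ℂ) * (ω : ℂ)) * a i) *
          (starRingEnd ℂ) (∑ i, Complex.exp (Complex.I * (e i : ℂ) * (ω : ℂ)) * a i)) =
      (2 * Real.pi : ℂ) * ∑ i, (Complex.normSq (a i) : ℂ) := by
  have hpt : ∀ ω : ℝ,
      (∑ i, Complex.exp (Complex.I * (e i : ℂ) * (ω : ℂ)) * a i) *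
        (starRingEnd ℂ) (∑ i, Complex.exp (Complex.I * (e i : ℂ) * (ω : ℂ)) * a i)
      = ∑ i, ∑ i', Complex.exp (Complex.I * ((e i - e i' : ℤ) : ℂ) * (ω : ℂ))
          * (a i * (starRingEnd ℂ) (a i')) := by
    intro ω
    rw [map_sum, Finset.sum_mul_sum]
    refine Finset.sum_congr rfl fun i _ => Finset.sum_congr rfl fun i' _ => ?_
    rw [_root_.map_mul, ← Complex.exp_conj]
    have hconj : (starRingEnd ℂ) (Complex.I * (e i' : ℂ) * (ω : ℂ))
        = -(Complex.I * (e i' : ℂ) * (ω : ℂ)) := by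
      simp [Complex.ext_iff]
    rw [hconj]
    rw [show Complex.exp (Complex.I * (e i : ℂ) * (ω : ℂ)) * a i *
        (Complex.exp (-(Complex.I * (e i' : ℂ) * (ω : ℂ))) * (starRingEnd ℂ) (a i'))
      = (Complex.exp (Complex.I * (e i : ℂ) * (ω : ℂ)) *
          Complex.exp (-(Complex.I * (e i' : ℂ) * (ω : ℂ)))) * (a i * (starRingEnd ℂ) (a i'))
      from by ring, ← Complex.exp_add]
    congr 2
    push_cast
    ring
  rw [intervalIntegral.integral_congr (g := fun ω : ℝ =>
      ∑ i, ∑ i', Complex.exp (Complex.I * ((e i - e i' : ℤ) : ℂ) * (ω : ℂ))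
        * (a i * (starRingEnd ℂ) (a i'))) (fun ω _ => hpt ω)]
  have hcont : ∀ i : ι, Continuous fun ω : ℝ =>
      ∑ i', Complex.exp (Complex.I * ((e i - e i' : ℤ) : ℂ) * (ω : ℂ))
        * (a i * (starRingEnd ℂ) (a i')) := fun i =>
    continuous_finset_sum _ fun i' _ => cont_exp_smul _ _
  rw [intervalIntegral.integral_finset_sum
    (fun i (_ : i ∈ Finset.univ) => (hcont i).intervalIntegrable _ _)]
  have hterm : ∀ i i' : ι,
      (∫ ω in (-Real.pi)..Real.pi,
        Complex.exp (Complex.I * ((e i - e i' : ℤ) : ℂ) * (ω : ℂ)) * (a i * (starRingEnd ℂ) (a i')))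
      = if i' = i then (2 * Real.pi : ℂ) * (a i * (starRingEnd ℂ) (a i)) else 0 := by
    intro i i'
    rw [intervalIntegral.integral_mul_const, int_exp_int]
    rcases eq_or_ne i' i with rfl | hne
    · simp
    · rw [if_neg, zero_mul, if_neg hne]
      intro h0
      exact hne (he (by omega)).symm
  calc (∑ i, ∫ ω in (-Real.pi)..Real.pi,
        ∑ i', Complex.exp (Complex.I * ((e i - e i' : ℤ) : ℂ) * (ω : ℂ))
          * (a i * (starRingEnd ℂ) (a i')))
      = ∑ i, ∑ i', if i' = i then (2 * Real.pi : ℂ) * (a i * (starRingEnd ℂ) (a i)) else 0 := by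
        refine Finset.sum_congr rfl fun i _ => ?_
        rw [intervalIntegral.integral_finset_sum
          (fun i' (_ : i' ∈ Finset.univ) => (cont_exp_smul _ _).intervalIntegrable _ _)]
        exact Finset.sum_congr rfl fun i' _ => hterm i i'
    _ = ∑ i, (2 * Real.pi : ℂ) * (a i * (starRingEnd ℂ) (a i)) := by
        refine Finset.sum_congr rfl fun i _ => ?_
        rw [Finset.sum_ite_eq' Finset.univ i]
        simp
    _ = (2 * Real.pi : ℂ) * ∑ i, (Complex.normSq (a i) : ℂ) := by
        rw [Finset.mul_sum]
        refine Finset.sum_congr rfl fun i _ => ?_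
        rw [Complex.mul_conj]

lemma parseval_real {ι κ : Type*} [Fintype ι] [DecidableEq ι] [Fintype κ]
    (e : ι → ℤ) (he : Function.Injective e) (a : ι → κ → ℂ) :
    (∫ ω in (-Real.pi)..Real.pi,
        Qsum (fun c => ∑ i, Complex.exp (Complex.I * (e i : ℂ) * (ω : ℂ)) * a i c)) =
      2 * Real.pi * ∑ i, Qsum (a i) := by
  have key : ((∫ ω in (-Real.pi)..Real.pi,
        Qsum (fun c => ∑ i, Complex.exp (Complex.I * (e i : ℂ) * (ω : ℂ)) * a i c) : ℝ) : ℂ)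
      = ((2 * Real.pi * ∑ i, Qsum (a i) : ℝ) : ℂ) := by
    rw [← intervalIntegral.integral_ofReal]
    have hpt : ∀ ω : ℝ,
        ((Qsum (fun c => ∑ i, Complex.exp (Complex.I * (e i : ℂ) * (ω : ℂ)) * a i c) : ℝ) : ℂ)
        = ∑ c, ((∑ i, Complex.exp (Complex.I * (e i : ℂ) * (ω : ℂ)) * a i c) *
            (starRingEnd ℂ) (∑ i, Complex.exp (Complex.I * (e i : ℂ) * (ω : ℂ)) * a i c)) := by
      intro ω
      unfold Qsum
      push_cast
      exact Finset.sum_congr rfl fun c _ => by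
        rw [Complex.normSq_eq_conj_mul_self]; ring
    rw [intervalIntegral.integral_congr (fun ω _ => hpt ω)]
    have hcont : ∀ c : κ, Continuous fun ω : ℝ =>
        (∑ i, Complex.exp (Complex.I * (e i : ℂ) * (ω : ℂ)) * a i c) *
          (starRingEnd ℂ) (∑ i, Complex.exp (Complex.I * (e i : ℂ) * (ω : ℂ)) * a i c) := by
      intro c
      have h1 : Continuous fun ω : ℝ =>
          ∑ i, Complex.exp (Complex.I * (e i : ℂ) * (ω : ℂ)) * a i c :=
        continuous_finset_sum _ fun i _ => cont_exp_smul _ _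
      exact h1.mul (Complex.continuous_conj.comp h1)
    rw [intervalIntegral.integral_finset_sum
      (fun c (_ : c ∈ Finset.univ) => (hcont c).intervalIntegrable _ _)]
    have := fun c : κ => parseval_complex e he (fun i => a i c)
    rw [Finset.sum_congr rfl fun c _ => this c]
    rw [← Finset.mul_sum]
    push_cast
    rw [Finset.sum_comm]
    norm_num [Qsum, Finset.mul_sum]
  exact_mod_cast key

lemma Qsum_mulVec_le_frob {m n : Type*} [Fintype m] [Fintype n] (A : Matrix m n ℂ) (x : n → ℂ) :
    Qsum (A *ᵥ x) ≤ (∑ c, ∑ d, Complex.normSq (A c d)) * Qsum x := by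
  unfold Qsum
  rw [Finset.sum_mul]
  refine Finset.sum_le_sum fun c _ => ?_
  have h1 : ‖(A *ᵥ x) c‖ ≤ ∑ d, ‖A c d‖ * ‖x d‖ := by
    rw [Matrix.mulVec, dotProduct]
    refine (norm_sum_le _ _).trans ?_
    exact le_of_eq (Finset.sum_congr rfl fun d _ => norm_mul _ _)
  have h2 : (∑ d, ‖A c d‖ * ‖x d‖)^2
      ≤ (∑ d, ‖A c d‖ ^ 2) * ∑ d, ‖x d‖ ^ 2 :=
    Finset.sum_mul_sq_le_sq_mul_sq _ _ _
  calc Complex.normSq ((A *ᵥ x) c) = ‖(A *ᵥ x) c‖ ^ 2 := Complex.sq_norm _ |>.symm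
    _ ≤ (∑ d, ‖A c d‖ * ‖x d‖)^2 := by
        exact pow_le_pow_left₀ (norm_nonneg _) h1 2
    _ ≤ (∑ d, ‖A c d‖ ^ 2) * ∑ d, ‖x d‖ ^ 2 := h2
    _ = (∑ d, Complex.normSq (A c d)) * ∑ d, Complex.normSq (x d) := by
        congr 1 <;> exact Finset.sum_congr rfl fun d _ => Complex.sq_norm _

/-- For a banded block Toeplitz matrix `T` generated by the matrix trigonometric polynomial
`F(ω) = Σ_k T_k e^{ikω}`, the spectral norm of `T` is at most `max_ω ‖F(ω)‖₂`. -/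
theorem stmt12 (r s h₁ h₂ : ℕ) (Tb : ℤ → Matrix (Fin r) (Fin s) ℂ)
    (hband : ∀ k : ℤ, (k < -(h₁ : ℤ) ∨ (h₂ : ℤ) < k) → Tb k = 0) :
    let F : ℝ → Matrix (Fin r) (Fin s) ℂ := fun ω =>
      ∑ k ∈ Finset.Icc (-(h₁ : ℤ)) (h₂ : ℤ),
        Complex.exp (Complex.I * (((k : ℝ) * ω : ℝ) : ℂ)) • Tb k
    let T : (n : ℕ) → Matrix (Fin n × Fin r) (Fin n × Fin s) ℂ :=
      fun n ic jd => Tb (((ic.1 : ℕ) : ℤ) - ((jd.1 : ℕ) : ℤ)) ic.2 jd.2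
    ∀ n : ℕ, specNorm (T n) ≤ ⨆ ω ∈ Set.Icc (-Real.pi) Real.pi, specNorm (F ω) := by
  intro F T n
  have hF : ∀ (ω : ℝ) (c : Fin r) (d : Fin s),
      F ω c d = ∑ k ∈ Finset.Icc (-(h₁ : ℤ)) (h₂ : ℤ),
        Complex.exp (Complex.I * (k : ℂ) * (ω : ℂ)) * Tb k c d := by
    intro ω c d
    simp only [F, Matrix.sum_apply, Matrix.smul_apply, smul_eq_mul]
    refine Finset.sum_congr rfl fun k _ => ?_
    congr 1
    push_cast
    ring
  set C₀ : ℝ := ∑ c, ∑ d, (∑ k ∈ Finset.Icc (-(h₁ : ℤ)) (h₂ : ℤ), ‖Tb k c d‖)^2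
    with hC₀
  have habs_exp : ∀ (k : ℤ) (ω : ℝ), ‖Complex.exp (Complex.I * (k : ℂ) * (ω : ℂ))‖ = 1 := by
    intro k ω
    rw [Complex.norm_exp]
    norm_num [Complex.mul_re]
  have hFrob : ∀ ω : ℝ, ∑ c, ∑ d, Complex.normSq (F ω c d) ≤ C₀ := by
    intro ω
    refine Finset.sum_le_sum fun c _ => Finset.sum_le_sum fun d _ => ?_
    rw [← Complex.sq_norm, hF]
    refine pow_le_pow_left₀ (norm_nonneg _) ?_ 2
    refine (norm_sum_le _ _).trans (le_of_eq ?_)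
    refine Finset.sum_congr rfl fun k _ => ?_
    rw [norm_mul, habs_exp, one_mul]
  have hC₀nonneg : 0 ≤ C₀ :=
    Finset.sum_nonneg fun c _ => Finset.sum_nonneg fun d _ => sq_nonneg _
  have hspecF : ∀ ω : ℝ, specNorm (F ω) ≤ Real.sqrt C₀ := by
    intro ω
    refine specNorm_le_of_quad _ (Real.sqrt_nonneg _) fun x => ?_
    rw [Real.sq_sqrt hC₀nonneg]
    exact (Qsum_mulVec_le_frob (F ω) x).trans
      (mul_le_mul_of_nonneg_right (hFrob ω) (Qsum_nonneg x))
  have hBdd : BddAbove (Set.range fun ω : ℝ =>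
      ⨆ _ : ω ∈ Set.Icc (-Real.pi) Real.pi, specNorm (F ω)) := by
    refine ⟨Real.sqrt C₀, ?_⟩
    rintro y ⟨ω, rfl⟩
    exact Real.iSup_le (fun _ => hspecF ω) (Real.sqrt_nonneg _)
  have hMle : ∀ ω ∈ Set.Icc (-Real.pi) Real.pi,
      specNorm (F ω) ≤ ⨆ ω ∈ Set.Icc (-Real.pi) Real.pi, specNorm (F ω) := by
    intro ω hω
    have h1 := le_ciSup hBdd ω
    rwa [ciSup_pos hω] at h1
  have hM0 : 0 ≤ ⨆ ω ∈ Set.Icc (-Real.pi) Real.pi, specNorm (F ω) :=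
    le_trans (specNorm_nonneg (F 0))
      (hMle 0 ⟨by linarith [Real.pi_pos], le_of_lt Real.pi_pos⟩)
  set Msup := ⨆ ω ∈ Set.Icc (-Real.pi) Real.pi, specNorm (F ω) with hMsup
  refine specNorm_le_of_quad _ hM0 fun v => ?_
  set S : Finset ℤ := Finset.Icc (-(h₁ : ℤ)) ((n : ℤ) - 1 + (h₂ : ℤ)) with hS
  set cm : ℤ → Fin r → ℂ :=
    fun mm c => ∑ j : Fin n, ∑ d, Tb (mm - ((j : ℕ) : ℤ)) c d * v (j, d) with hcm
  set vhat : ℝ → Fin s → ℂ :=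
    fun ω d => ∑ j : Fin n, Complex.exp (Complex.I * (((j : ℕ) : ℤ) : ℂ) * (ω : ℂ)) * v (j, d)
    with hvhat
  have hinj : Function.Injective (fun i : Fin n => ((i : ℕ) : ℤ)) := by
    intro a b hab
    have hab' : ((a : ℕ) : ℤ) = ((b : ℕ) : ℤ) := hab
    exact Fin.ext (by exact_mod_cast hab')
  have hFv : ∀ (ω : ℝ) (c : Fin r),
      ((F ω) *ᵥ (vhat ω)) c = ∑ mm ∈ S, Complex.exp (Complex.I * (mm : ℂ) * (ω : ℂ)) * cm mm c := by
    intro ω c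
    have step1 : ((F ω) *ᵥ (vhat ω)) c
        = ∑ k ∈ Finset.Icc (-(h₁ : ℤ)) (h₂ : ℤ), ∑ j : Fin n,
            Complex.exp (Complex.I * ((k + ((j : ℕ) : ℤ) : ℤ) : ℂ) * (ω : ℂ)) *
              (∑ d, Tb k c d * v (j, d)) := by
      have h0 : ((F ω) *ᵥ (vhat ω)) c = ∑ d, F ω c d * vhat ω d := by
        simp [Matrix.mulVec, dotProduct]
      rw [h0]
      calc ∑ d, F ω c d * vhat ω d
          = ∑ d, ∑ k ∈ Finset.Icc (-(h₁ : ℤ)) (h₂ : ℤ), ∑ j : Fin n,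
              (Complex.exp (Complex.I * (k : ℂ) * (ω : ℂ)) * Tb k c d) *
                (Complex.exp (Complex.I * (((j : ℕ) : ℤ) : ℂ) * (ω : ℂ)) * v (j, d)) := by
            refine Finset.sum_congr rfl fun d _ => ?_
            rw [hF, hvhat, Finset.sum_mul_sum]
        _ = ∑ k ∈ Finset.Icc (-(h₁ : ℤ)) (h₂ : ℤ), ∑ j : Fin n, ∑ d,
              (Complex.exp (Complex.I * (k : ℂ) * (ω : ℂ)) * Tb k c d) *
                (Complex.exp (Complex.I * (((j : ℕ) : ℤ) : ℂ) * (ω : ℂ)) * v (j, d)) := by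
            rw [Finset.sum_comm]
            exact Finset.sum_congr rfl fun k _ => Finset.sum_comm
        _ = ∑ k ∈ Finset.Icc (-(h₁ : ℤ)) (h₂ : ℤ), ∑ j : Fin n,
              Complex.exp (Complex.I * ((k + ((j : ℕ) : ℤ) : ℤ) : ℂ) * (ω : ℂ)) *
                (∑ d, Tb k c d * v (j, d)) := by
            refine Finset.sum_congr rfl fun k _ => Finset.sum_congr rfl fun j _ => ?_
            rw [Finset.mul_sum]
            refine Finset.sum_congr rfl fun d _ => ?_
            have hexp : Complex.exp (Complex.I * ((k + ((j : ℕ) : ℤ) : ℤ) : ℂ) * (ω : ℂ))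
                = Complex.exp (Complex.I * (k : ℂ) * (ω : ℂ)) *
                    Complex.exp (Complex.I * (((j : ℕ) : ℤ) : ℂ) * (ω : ℂ)) := by
              rw [← Complex.exp_add]
              congr 1
              push_cast
              ring
            rw [hexp]
            ring
    have step2 : ∀ j : Fin n,
        (∑ k ∈ Finset.Icc (-(h₁ : ℤ)) (h₂ : ℤ),
          Complex.exp (Complex.I * ((k + ((j : ℕ) : ℤ) : ℤ) : ℂ) * (ω : ℂ)) *
            (∑ d, Tb k c d * v (j, d)))
        = ∑ mm ∈ S, Complex.exp (Complex.I * (mm : ℂ) * (ω : ℂ)) *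
            (∑ d, Tb (mm - ((j : ℕ) : ℤ)) c d * v (j, d)) := by
      intro j
      have h1 : (∑ k ∈ Finset.Icc (-(h₁ : ℤ)) (h₂ : ℤ),
          Complex.exp (Complex.I * ((k + ((j : ℕ) : ℤ) : ℤ) : ℂ) * (ω : ℂ)) *
            (∑ d, Tb k c d * v (j, d)))
          = ∑ mm ∈ Finset.Icc (-(h₁ : ℤ) + ((j : ℕ) : ℤ)) ((h₂ : ℤ) + ((j : ℕ) : ℤ)),
              Complex.exp (Complex.I * (mm : ℂ) * (ω : ℂ)) *
                (∑ d, Tb (mm - ((j : ℕ) : ℤ)) c d * v (j, d)) := by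
        rw [← Finset.map_add_right_Icc, Finset.sum_map]
        refine Finset.sum_congr rfl fun k hk => ?_
        simp only [addRightEmbedding_apply, add_sub_cancel_right]
      rw [h1]
      refine Finset.sum_subset ?_ ?_
      · intro mm hmm
        rw [Finset.mem_Icc] at hmm ⊢
        have := j.isLt
        omega
      · intro mm hmm hnot
        have hzero : Tb (mm - ((j : ℕ) : ℤ)) = 0 := by
          refine hband _ ?_
          rw [Finset.mem_Icc] at hmm hnot
          omega
        simp [hzero]
    rw [step1, Finset.sum_comm]
    rw [Finset.sum_congr rfl fun j (_ : j ∈ Finset.univ) => step2 j]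
    rw [Finset.sum_comm]
    refine Finset.sum_congr rfl fun mm _ => ?_
    rw [hcm, Finset.mul_sum]
  have hTv : Qsum ((T n) *ᵥ v) = ∑ i : Fin n, Qsum (cm ((i : ℕ) : ℤ)) := by
    unfold Qsum
    rw [Fintype.sum_prod_type]
    refine Finset.sum_congr rfl fun i _ => Finset.sum_congr rfl fun c _ => ?_
    congr 1
    simp [T, Matrix.mulVec, dotProduct, Fintype.sum_prod_type, hcm]
  have hQT : Qsum ((T n) *ᵥ v) ≤ ∑ mm ∈ S, Qsum (cm mm) := by
    rw [hTv]
    have h1 : ∑ i : Fin n, Qsum (cm ((i : ℕ) : ℤ))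
        = ∑ mm ∈ Finset.univ.map ⟨fun i : Fin n => ((i : ℕ) : ℤ), hinj⟩, Qsum (cm mm) := by
      rw [Finset.sum_map]
      rfl
    rw [h1]
    refine Finset.sum_le_sum_of_subset_of_nonneg ?_ fun mm _ _ => Qsum_nonneg _
    intro mm hmm
    simp only [Finset.mem_map, Finset.mem_univ, true_and, Function.Embedding.coeFn_mk] at hmm
    obtain ⟨i, rfl⟩ := hmm
    rw [hS, Finset.mem_Icc]
    have := i.isLt
    omega
  have hP1 : (∫ ω in (-Real.pi)..Real.pi,
      Qsum (fun c => ∑ mm ∈ S, Complex.exp (Complex.I * (mm : ℂ) * (ω : ℂ)) * cm mm c))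
      = 2 * Real.pi * ∑ mm ∈ S, Qsum (cm mm) := by
    have hpr := parseval_real (ι := {x : ℤ // x ∈ S}) (fun i => (i : ℤ))
      Subtype.val_injective (fun i => cm (i : ℤ))
    have e1 : ∀ (ω : ℝ) (c : Fin r),
        (∑ mm ∈ S, Complex.exp (Complex.I * (mm : ℂ) * (ω : ℂ)) * cm mm c)
        = ∑ i : {x : ℤ // x ∈ S},
            Complex.exp (Complex.I * (((i : ℤ)) : ℂ) * (ω : ℂ)) * cm (i : ℤ) c := fun ω c =>
      (Finset.sum_coe_sort S
        (fun mm => Complex.exp (Complex.I * (mm : ℂ) * (ω : ℂ)) * cm mm c)).symm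
    have e2 : (∑ mm ∈ S, Qsum (cm mm)) = ∑ i : {x : ℤ // x ∈ S}, Qsum (cm (i : ℤ)) :=
      (Finset.sum_coe_sort S (fun mm => Qsum (cm mm))).symm
    calc (∫ ω in (-Real.pi)..Real.pi,
        Qsum (fun c => ∑ mm ∈ S, Complex.exp (Complex.I * (mm : ℂ) * (ω : ℂ)) * cm mm c))
        = ∫ ω in (-Real.pi)..Real.pi,
            Qsum (fun c => ∑ i : {x : ℤ // x ∈ S},
              Complex.exp (Complex.I * (((i : ℤ)) : ℂ) * (ω : ℂ)) * cm (i : ℤ) c) := by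
          refine intervalIntegral.integral_congr fun ω _ => ?_
          exact congrArg Qsum (funext (e1 ω))
      _ = 2 * Real.pi * ∑ i : {x : ℤ // x ∈ S}, Qsum (cm (i : ℤ)) := hpr
      _ = 2 * Real.pi * ∑ mm ∈ S, Qsum (cm mm) := by rw [← e2]
  have hP2 : (∫ ω in (-Real.pi)..Real.pi, Qsum (vhat ω)) = 2 * Real.pi * Qsum v := by
    have hpr := parseval_real (ι := Fin n) (fun j => ((j : ℕ) : ℤ)) hinj (fun j d => v (j, d))
    rw [hvhat]
    rw [hpr]
    congr 1
    unfold Qsum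
    rw [Fintype.sum_prod_type]
  have hcont1 : Continuous fun ω : ℝ =>
      Qsum (fun c => ∑ mm ∈ S, Complex.exp (Complex.I * (mm : ℂ) * (ω : ℂ)) * cm mm c) := by
    unfold Qsum
    exact continuous_finset_sum _ fun c _ => Complex.continuous_normSq.comp
      (continuous_finset_sum _ fun mm _ => cont_exp_smul _ _)
  have hcont2 : Continuous fun ω : ℝ => Qsum (vhat ω) := by
    rw [hvhat]
    unfold Qsum
    exact continuous_finset_sum _ fun d _ => Complex.continuous_normSq.comp
      (continuous_finset_sum _ fun j _ => cont_exp_smul _ _)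
  have hmono : (∫ ω in (-Real.pi)..Real.pi,
      Qsum (fun c => ∑ mm ∈ S, Complex.exp (Complex.I * (mm : ℂ) * (ω : ℂ)) * cm mm c))
      ≤ ∫ ω in (-Real.pi)..Real.pi, Msup ^ 2 * Qsum (vhat ω) := by
    refine intervalIntegral.integral_mono_on (by linarith [Real.pi_pos])
      (hcont1.intervalIntegrable _ _) ((continuous_const.mul hcont2).intervalIntegrable _ _) ?_
    intro ω hω
    have hg : (fun c => ∑ mm ∈ S, Complex.exp (Complex.I * (mm : ℂ) * (ω : ℂ)) * cm mm c)
        = (F ω) *ᵥ (vhat ω) := by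
      funext c
      exact (hFv ω c).symm
    rw [hg]
    calc Qsum ((F ω) *ᵥ (vhat ω)) ≤ (specNorm (F ω))^2 * Qsum (vhat ω) := mulVec_le_specNorm _ _
      _ ≤ Msup ^ 2 * Qsum (vhat ω) := by
          refine mul_le_mul_of_nonneg_right ?_ (Qsum_nonneg _)
          exact pow_le_pow_left₀ (specNorm_nonneg _) (hMle ω hω) 2
  have hconst : (∫ ω in (-Real.pi)..Real.pi, Msup ^ 2 * Qsum (vhat ω))
      = Msup ^ 2 * (2 * Real.pi * Qsum v) := by
    rw [intervalIntegral.integral_const_mul, hP2]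
  have hfinal : 2 * Real.pi * Qsum ((T n) *ᵥ v) ≤ 2 * Real.pi * (Msup ^ 2 * Qsum v) := by
    calc 2 * Real.pi * Qsum ((T n) *ᵥ v)
        ≤ 2 * Real.pi * ∑ mm ∈ S, Qsum (cm mm) :=
          mul_le_mul_of_nonneg_left hQT (by positivity)
      _ = ∫ ω in (-Real.pi)..Real.pi,
            Qsum (fun c => ∑ mm ∈ S, Complex.exp (Complex.I * (mm : ℂ) * (ω : ℂ)) * cm mm c) :=
          hP1.symm
      _ ≤ ∫ ω in (-Real.pi)..Real.pi, Msup ^ 2 * Qsum (vhat ω) := hmono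
      _ = Msup ^ 2 * (2 * Real.pi * Qsum v) := hconst
      _ = 2 * Real.pi * (Msup ^ 2 * Qsum v) := by ring
  have h2pi : (0 : ℝ) < 2 * Real.pi := by linarith [Real.pi_pos]
  exact le_of_mul_le_mul_left hfinal h2pi
end
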